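/- Under the hypotheses of the regret bound for FxTS-GF (f differentiable with gradient ∇f, unique minimizer x* with minimum value f*, PL inequality with modulus μ > 0, c1, c2 > 0, p1 > 2, p2 ∈ (1,2), α := p1/(2(p1−1)), p := c1(2μ)^α), if additionally the initial condition satisfies f(x(0)) − f* ≤ 1, then every differentiable solution x : ℝ → ℝ^n of the FxTS-GF dynamics satisfies ∫₀^T (f(x(t)) − f*) dt ≤ 1/(p(2−α)) for every T ≥ 0. -/

import Mathlib

open Classical

/-- Case 2 of Theorem 3: if the initial condition satisfies
`f(x(0)) - f* ≤ 1`, then the static regret of FxTS-GF is bounded by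
`l1 = 1/(p(2-α))`, uniformly in `T ≥ 0`. -/
theorem stmt_12 (n : ℕ) (f : EuclideanSpace ℝ (Fin n) → ℝ)
    (f' : EuclideanSpace ℝ (Fin n) → EuclideanSpace ℝ (Fin n))
    (hgrad : ∀ y, HasGradientAt f (f' y) y)
    (xstar : EuclideanSpace ℝ (Fin n)) (fstar μ : ℝ) (hμ : 0 < μ)
    (hfstar : f xstar = fstar) (hmin : ∀ y, fstar ≤ f y)
    (huniq : ∀ y, f y = fstar → y = xstar)
    (hPL : ∀ y, μ * (f y - fstar) ≤ (1 / 2) * ‖f' y‖ ^ 2)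
    (c1 c2 p1 p2 : ℝ) (hc1 : 0 < c1) (hc2 : 0 < c2)
    (hp1 : 2 < p1) (hp2 : p2 ∈ Set.Ioo (1 : ℝ) 2)
    (α p : ℝ) (hα : α = p1 / (2 * (p1 - 1))) (hpdef : p = c1 * (2 * μ) ^ α)
    (x : ℝ → EuclideanSpace ℝ (Fin n))
    (hx : ∀ t, 0 ≤ t → HasDerivAt x
      (if f' (x t) = 0 then 0 else
        -(c1 / ‖f' (x t)‖ ^ ((p1 - 2) / (p1 - 1))) • f' (x t)
          - (c2 / ‖f' (x t)‖ ^ ((p2 - 2) / (p2 - 1))) • f' (x t)) t)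
    (hinit : f (x 0) - fstar ≤ 1) :
    ∀ T : ℝ, 0 ≤ T →
      (∫ t in (0 : ℝ)..T, (f (x t) - fstar)) ≤ 1 / (p * (2 - α)) := by
  set V : ℝ → ℝ := fun t => f (x t) - fstar with hVdef
  have hp1' : (0:ℝ) < p1 - 1 := by linarith
  have hα0 : 0 < α := by rw [hα]; positivity
  have hα1 : α < 1 := by
    rw [hα, div_lt_one (by positivity)]; linarith
  have hp0 : 0 < p := by rw [hpdef]; positivity
  have h2α : (0:ℝ) < 2 - α := by linarith
  have hden : 0 < p * (2 - α) := by positivity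
  have hV0 : ∀ t, 0 ≤ V t := fun t => by simp [hVdef, hmin (x t)]
  -- derivative of V with the key bound
  have key : ∀ t, 0 ≤ t → ∃ d, HasDerivAt V d t ∧ d ≤ -p * (V t) ^ α := by
    intro t ht
    set g := f' (x t) with hg
    set v : EuclideanSpace ℝ (Fin n) :=
      (if g = 0 then 0 else
        -(c1 / ‖g‖ ^ ((p1 - 2) / (p1 - 1))) • g
          - (c2 / ‖g‖ ^ ((p2 - 2) / (p2 - 1))) • g) with hv
    have hfd : HasDerivAt (fun s => f (x s)) (inner ℝ g v : ℝ) t := by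
      have h := (hgrad (x t)).hasFDerivAt.comp_hasDerivAt t (hx t ht)
      rw [InnerProductSpace.toDual_apply_apply] at h
      exact h
    refine ⟨inner ℝ g v, hfd.sub_const fstar, ?_⟩
    by_cases hgz : g = 0
    · have hVt : V t = 0 := by
        have h1 := hPL (x t)
        rw [← hg, hgz] at h1
        simp at h1
        have := hV0 t
        have : μ * V t ≤ 0 := by simpa [hVdef] using h1
        nlinarith [hV0 t]
      have : (inner ℝ g v : ℝ) = 0 := by simp [hv, hgz]
      rw [this, hVt, Real.zero_rpow (ne_of_gt hα0)]
      simp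
    · have hN : 0 < ‖g‖ := norm_pos_iff.mpr hgz
      set N := ‖g‖ with hNdef
      have hinner : (inner ℝ g v : ℝ) =
          -(c1 / N ^ ((p1 - 2) / (p1 - 1))) * N ^ 2
            - (c2 / N ^ ((p2 - 2) / (p2 - 1))) * N ^ 2 := by
        simp only [hv, if_neg hgz, inner_sub_right, inner_neg_right,
          real_inner_smul_right, real_inner_self_eq_norm_sq]
        rw [← hNdef]
      have hterm2 : 0 ≤ (c2 / N ^ ((p2 - 2) / (p2 - 1))) * N ^ 2 :=
        mul_nonneg (div_nonneg hc2.le (Real.rpow_nonneg (norm_nonneg _) _)) (sq_nonneg N)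
      have hexp : (2:ℝ) - (p1 - 2) / (p1 - 1) = 2 * α := by
        rw [hα]; field_simp; ring
      have hterm1 : -(c1 / N ^ ((p1 - 2) / (p1 - 1))) * N ^ 2
          = -(c1 * N ^ (2 * α)) := by
        have : N ^ (2:ℝ) / N ^ ((p1 - 2) / (p1 - 1)) = N ^ (2 * α) := by
          rw [← Real.rpow_sub hN, hexp]
        rw [← this, ← Real.rpow_natCast N 2]
        push_cast
        ring
      have hPLt : 2 * μ * V t ≤ N ^ 2 := by
        have := hPL (x t)
        simp only [hVdef, ← hg, ← hNdef] at this ⊢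
        linarith
      have hmono : (2 * μ * V t) ^ α ≤ N ^ (2 * α) := by
        have h1 : (2 * μ * V t) ^ α ≤ (N ^ 2 : ℝ) ^ α :=
          Real.rpow_le_rpow (mul_nonneg (by positivity) (hV0 t)) hPLt hα0.le
        have h2 : ((N ^ 2 : ℝ)) ^ α = N ^ (2 * α) := by
          rw [← Real.rpow_natCast N 2, ← Real.rpow_mul hN.le]
          norm_num
        rw [← h2]; exact h1
      have hsplit : (2 * μ * V t) ^ α = (2 * μ) ^ α * (V t) ^ α :=
        Real.mul_rpow (by positivity) (hV0 t)
      calc (inner ℝ g v : ℝ)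
          ≤ -(c1 * N ^ (2 * α)) := by rw [hinner, hterm1]; linarith
        _ ≤ -(c1 * (2 * μ * V t) ^ α) := by
            have := mul_le_mul_of_nonneg_left hmono hc1.le
            linarith
        _ = -p * (V t) ^ α := by rw [hsplit, hpdef]; ring
  -- continuity of V on [0, ∞)
  have hVcontAt : ∀ t, 0 ≤ t → ContinuousAt V t := by
    intro t ht
    exact (((hgrad (x t)).hasFDerivAt.continuousAt.comp
      (hx t ht).continuousAt).sub continuousAt_const)
  intro T hT
  have hVcontOn : ContinuousOn V (Set.Icc 0 T) := fun t ht =>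
    (hVcontAt t ht.1).continuousWithinAt
  have hVint : MeasureTheory.IntegrableOn V (Set.Icc 0 T) :=
    hVcontOn.integrableOn_Icc
  -- the Lyapunov-like function Φ
  set G : ℝ → ℝ := fun v => v ^ (2 - α) / (p * (2 - α)) with hGdef
  have hGcont : Continuous G := by
    apply Continuous.div_const
    exact Real.continuous_rpow_const h2α.le
  set Φ : ℝ → ℝ := fun t => (∫ s in (0:ℝ)..t, V s) + G (V t) with hΦdef
  have hΦcont : ContinuousOn Φ (Set.Icc 0 T) := by
    apply ContinuousOn.add
    · have := intervalIntegral.continuousOn_primitive_interval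
        (by rwa [Set.uIcc_of_le hT] : MeasureTheory.IntegrableOn V (Set.uIcc 0 T))
      rwa [Set.uIcc_of_le hT] at this
    · exact hGcont.comp_continuousOn hVcontOn
  -- derivative of Φ at interior points
  have hΦderiv : ∀ t ∈ Set.Ioo (0:ℝ) T,
      ∃ d, HasDerivAt Φ d t ∧ d ≤ 0 := by
    intro t ht
    obtain ⟨d, hd, hdle⟩ := key t ht.1.le
    have hint : IntervalIntegrable V MeasureTheory.volume 0 t := by
      apply ContinuousOn.intervalIntegrable
      rw [Set.uIcc_of_le ht.1.le]
      exact hVcontOn.mono (Set.Icc_subset_Icc le_rfl ht.2.le)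
    have hmeas : StronglyMeasurableAtFilter V (nhds t) MeasureTheory.volume :=
      ContinuousAt.stronglyMeasurableAtFilter isOpen_Ioi
        (fun s hs => hVcontAt s (le_of_lt hs)) t ht.1
    have h1 : HasDerivAt (fun u => ∫ s in (0:ℝ)..u, V s) (V t) t :=
      intervalIntegral.integral_hasDerivAt_right hint hmeas (hVcontAt t ht.1.le)
    have h2 : HasDerivAt (fun u => G (V u))
        (d * (2 - α) * (V t) ^ (2 - α - 1) / (p * (2 - α))) t :=
      (hd.rpow_const (p := 2 - α) (Or.inr (by linarith))).div_const _
    refine ⟨V t + d * (2 - α) * (V t) ^ (2 - α - 1) / (p * (2 - α)), h1.add h2, ?_⟩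
    have he : (2:ℝ) - α - 1 = 1 - α := by ring
    rw [he]
    have hsimp : d * (2 - α) * (V t) ^ (1 - α) / (p * (2 - α))
        = (V t) ^ (1 - α) * d / p := by
      field_simp [hp0.ne', h2α.ne']
    rw [hsimp]
    rcases eq_or_lt_of_le (hV0 t) with hz | hpos
    · rw [← hz, Real.zero_rpow (by linarith : (1:ℝ) - α ≠ 0)]
      simp
    · have hr : (0:ℝ) ≤ (V t) ^ (1 - α) := Real.rpow_nonneg (hV0 t) _
      have hmul : (V t) ^ (1 - α) * d ≤ (V t) ^ (1 - α) * (-p * (V t) ^ α) :=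
        mul_le_mul_of_nonneg_left hdle hr
      have hcollapse : (V t) ^ (1 - α) * (V t) ^ α = V t := by
        rw [← Real.rpow_add hpos]
        norm_num
      have : (V t) ^ (1 - α) * d / p ≤ -(V t) := by
        rw [div_le_iff₀ hp0]
        calc (V t) ^ (1 - α) * d ≤ (V t) ^ (1 - α) * (-p * (V t) ^ α) := hmul
          _ = -((V t) ^ (1 - α) * (V t) ^ α) * p := by ring
          _ = -(V t) * p := by rw [hcollapse]
      linarith
  -- Φ is antitone on [0, T]
  have hanti : AntitoneOn Φ (Set.Icc 0 T) := by
    apply antitoneOn_of_deriv_nonpos (convex_Icc 0 T) hΦcont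
    · rw [interior_Icc]
      intro t ht
      obtain ⟨d, hd, _⟩ := hΦderiv t ht
      exact hd.differentiableAt.differentiableWithinAt
    · rw [interior_Icc]
      intro t ht
      obtain ⟨d, hd, hdle⟩ := hΦderiv t ht
      rw [hd.deriv]; exact hdle
  have hΦT : Φ T ≤ Φ 0 := hanti (Set.left_mem_Icc.mpr hT) (Set.right_mem_Icc.mpr hT) hT
  have hG0 : G (V 0) ≤ 1 / (p * (2 - α)) := by
    have h1 : (V 0) ^ (2 - α) ≤ 1 := Real.rpow_le_one (hV0 0) hinit h2α.le
    exact (div_le_div_iff_of_pos_right hden).mpr h1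
  have hGT : 0 ≤ G (V T) := div_nonneg (Real.rpow_nonneg (hV0 T) _) hden.le
  have h1 : Φ T = (∫ t in (0:ℝ)..T, V t) + G (V T) := rfl
  have h2 : Φ 0 = G (V 0) := by
    simp only [hΦdef, intervalIntegral.integral_same, zero_add]
  have : (∫ t in (0:ℝ)..T, V t) ≤ 1 / (p * (2 - α)) := by linarith
  exact this
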